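/- arXiv:0910.5250 — 3 statements merged into one kernel-verified Lean document; each statement's English description precedes it below -/
import Mathlib

section
/- There do not exist sums of squares of real polynomials σ, σ₀, σ₁,…,σₙ in 2n variables y₁,…,y_{2n} such that y_{n+1}³ + 1/2 = σ(y) + (2n − ‖y‖²)·σ₀(y) + Σ_{j=1}^{n} σ_j(y)·(1 − y_j²) holds identically as polynomials. -/
open MvPolynomial

lemma eval_nonneg_of_isSumSq {ι : Type*} {p : MvPolynomial ι ℝ} (hp : IsSumSq p)
    (x : ι → ℝ) : 0 ≤ eval x p := by
  induction hp with
  | zero => simp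
  | sq_add a _ ih =>
      simp only [map_add, map_mul]
      nlinarith [mul_self_nonneg (eval x a)]

theorem no_sos_representation (n : ℕ) (hn : 0 < n) :
    ¬ ∃ (σ σ₀ : MvPolynomial (Fin (2 * n)) ℝ)
        (σj : Fin n → MvPolynomial (Fin (2 * n)) ℝ),
      IsSumSq σ ∧ IsSumSq σ₀ ∧ (∀ j, IsSumSq (σj j)) ∧
      (X (⟨n, by omega⟩ : Fin (2 * n))) ^ 3 + C (1 / 2 : ℝ) =
        σ + (C ((2 * n : ℕ) : ℝ) - ∑ i : Fin (2 * n), (X i) ^ 2) * σ₀ +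
          ∑ j : Fin n, σj j * (1 - (X (Fin.castLE (by omega) j)) ^ 2) := by
  rintro ⟨σ, σ₀, σj, hσ, hσ₀, hσj, heq⟩
  set v : Fin (2 * n) → ℝ := fun i => if (i : ℕ) = n then (-1 : ℝ) else 0 with hv
  have h := congrArg (eval v) heq
  simp only [map_add, map_mul, map_sub, map_pow, map_sum, eval_X, eval_C, map_one] at h
  have hvn : v ⟨n, by omega⟩ = -1 := by simp [hv]
  rw [hvn] at h
  -- compute sum of squares of v
  have hsum : ∑ i : Fin (2 * n), v i ^ 2 = 1 := by
    rw [Finset.sum_eq_single (⟨n, by omega⟩ : Fin (2 * n))]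
    · rw [hvn]; ring
    · intro b _ hb
      have : (b : ℕ) ≠ n := fun hbn => hb (Fin.ext hbn)
      simp [hv, this]
    · simp
  rw [hsum] at h
  have hterms : ∀ j ∈ Finset.univ, 0 ≤ eval v (σj j) * (1 - v (Fin.castLE (by omega) j) ^ 2) := by
    intro j _
    have hj : ((Fin.castLE (by omega : n ≤ 2 * n) j : Fin (2 * n)) : ℕ) = (j : ℕ) := rfl
    have hjn : ((Fin.castLE (by omega : n ≤ 2 * n) j : Fin (2 * n)) : ℕ) ≠ n := by
      rw [hj]; omega
    have : v (Fin.castLE (by omega) j) = 0 := by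
      simp only [hv]
      rw [if_neg]
      have := j.isLt; omega
    rw [this]
    have := eval_nonneg_of_isSumSq (hσj j) v
    nlinarith
  have hs : 0 ≤ ∑ j : Fin n, eval v (σj j) * (1 - v (Fin.castLE (by omega) j) ^ 2) :=
    Finset.sum_nonneg hterms
  have h0 := eval_nonneg_of_isSumSq hσ v
  have h1 := eval_nonneg_of_isSumSq hσ₀ v
  have hcoef : (1 : ℝ) ≤ ((2 * n : ℕ) : ℝ) := by
    have : (1 : ℕ) ≤ 2 * n := by omega
    exact_mod_cast this
  nlinarith
end

section
/- Let A be a unital algebra of real-valued functions on a set X, Q ⊆ A a quadratic module with an algebraic interior point ξ, and suppose Q has the moment property: every linear functional L on A that is nonnegative on Q is represented by a positive Borel measure supported on the positivity set P(Q) = {x ∈ X : h(x) ≥ 0 for all h ∈ Q}. If f ∈ A satisfies f(x) > 0 for all x ∈ P(Q), then f ∈ Q. -/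
set_option maxHeartbeats 1000000


open MeasureTheory

/-- Positivstellensatz for a quadratic module with an algebraic interior point
and the moment property. -/
theorem mem_quadraticModule_of_pos
    {X : Type*} [MeasurableSpace X]
    (A : Subalgebra ℝ (X → ℝ)) (Q : Set A)
    -- Q is a quadratic module: convex cone containing 1, stable under
    -- multiplication by squares of elements of A
    (hQ1 : (1 : A) ∈ Q)
    (hQadd : ∀ p ∈ Q, ∀ q ∈ Q, p + q ∈ Q)
    (hQsmul : ∀ c : ℝ, 0 ≤ c → ∀ q ∈ Q, c • q ∈ Q)
    (hQsq : ∀ a : A, ∀ q ∈ Q, a ^ 2 * q ∈ Q)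
    -- ξ is an algebraic interior point of Q
    (ξ : A) (hξQ : ξ ∈ Q)
    (hξ : ∀ h : A, ∃ ε > (0 : ℝ), ∀ t : ℝ, 0 ≤ t → t < ε → ξ + t • h ∈ Q)
    -- the moment property: every linear functional nonnegative on Q is
    -- represented by a positive Borel measure supported on P(Q)
    (hmoment : ∀ L : A →ₗ[ℝ] ℝ, (∀ q ∈ Q, 0 ≤ L q) →
      ∃ μ : Measure X,
        μ {x : X | ¬ ∀ q ∈ Q, 0 ≤ (q : X → ℝ) x} = 0 ∧
        ∀ a : A, L a = ∫ x, (a : X → ℝ) x ∂μ)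
    -- f ∈ A is positive on P(Q)
    (f : A) (hf : ∀ x : X, (∀ q ∈ Q, 0 ≤ (q : X → ℝ) x) → 0 < (f : X → ℝ) x) :
    f ∈ Q := by
  by_contra hfQ
  have h0Q : (0 : A) ∈ Q := by simpa using hQsmul 0 le_rfl 1 hQ1
  -- if `-ξ ∈ Q` then `Q` is everything
  have huniv : -ξ ∈ Q → f ∈ Q := by
    intro hneg
    obtain ⟨ε, hε, ht⟩ := hξ f
    have h1 : ξ + (ε / 2) • f ∈ Q := ht _ (by positivity) (by linarith)
    have h2 : (ε / 2) • f ∈ Q := by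
      have := hQadd _ h1 _ hneg
      convert this using 1
      abel
    have := hQsmul (ε / 2)⁻¹ (by positivity) _ h2
    rwa [smul_smul, inv_mul_cancel₀ (by positivity), one_smul] at this
  have hξ0 : ξ ≠ 0 := by
    intro h
    exact hfQ (huniv (by rw [h, neg_zero]; exact h0Q))
  -- the convex cone generated by `Q` and `-f`
  set C : ConvexCone ℝ A :=
    { carrier := {x | ∃ q ∈ Q, ∃ s : ℝ, 0 ≤ s ∧ x = q + s • (-f)}
      smul_mem' := by
        rintro c hc x ⟨q, hq, s, hs, rfl⟩
        exact ⟨c • q, hQsmul c hc.le q hq, c * s, by positivity, by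
          rw [smul_add, smul_smul]⟩
      add_mem' := by
        rintro x ⟨q, hq, s, hs, rfl⟩ y ⟨q', hq', s', hs', rfl⟩
        refine ⟨q + q', hQadd _ hq _ hq', s + s', by positivity, ?_⟩
        rw [add_smul]
        abel } with hC
  have hQC : ∀ q ∈ Q, q ∈ C := fun q hq =>
    ⟨q, hq, 0, le_rfl, by rw [zero_smul, add_zero]⟩
  -- the partial functional sending `ξ` to `1`
  set f₀ : A →ₗ.[ℝ] ℝ := LinearPMap.mkSpanSingleton ξ (1 : ℝ) hξ0 with hf₀
  have nonneg : ∀ x : f₀.domain, (x : A) ∈ C → 0 ≤ f₀ x := by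
    rintro ⟨x, hx⟩ hxC
    rcases Submodule.mem_span_singleton.1 hx with ⟨c, rfl⟩
    have happ : f₀ ⟨c • ξ, hx⟩ = c • (1 : ℝ) :=
      LinearPMap.mkSpanSingleton'_apply _ _ _ c _
    rw [happ, smul_eq_mul, mul_one]
    by_contra hcneg
    push_neg at hcneg
    rcases hxC with ⟨q, hq, s, hs, heq⟩
    have heq' : c • ξ = q + s • (-f) := heq
    -- `s • f = q + (-c) • ξ ∈ Q`
    have he : s • f = q + (-c) • ξ := by
      rw [smul_neg] at heq'
      have h3 : s • f + c • ξ = q := by rw [heq']; abel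
      rw [neg_smul, ← h3]; abel
    have hsf : s • f ∈ Q := by
      rw [he]
      exact hQadd _ hq _ (hQsmul (-c) (by linarith) _ hξQ)
    rcases eq_or_lt_of_le hs with hs0 | hspos
    · -- then `c • ξ = q ∈ Q` with `c < 0`, so `-ξ ∈ Q`
      have hcξ : c • ξ ∈ Q := by
        rw [heq', ← hs0, zero_smul, add_zero]; exact hq
      have hnegξ : -ξ ∈ Q := by
        have hcne : (-c) ≠ 0 := by linarith
        have h4 := hQsmul (-c)⁻¹ (inv_nonneg.2 (by linarith)) _ hcξ
        rwa [smul_smul, show (-c)⁻¹ * c = -1 by rw [inv_neg, neg_mul, inv_mul_cancel₀ hcneg.ne], neg_one_smul] at h4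
      exact hfQ (huniv hnegξ)
    · have h5 := hQsmul s⁻¹ (inv_nonneg.2 hspos.le) _ hsf
      rw [smul_smul, inv_mul_cancel₀ hspos.ne', one_smul] at h5
      exact hfQ h5
  have dense : ∀ y : A, ∃ x : f₀.domain, (x : A) + y ∈ C := by
    intro y
    obtain ⟨ε, hε, ht⟩ := hξ y
    have h1 : ξ + (ε / 2) • y ∈ Q := ht _ (by positivity) (by linarith)
    refine ⟨⟨(ε / 2)⁻¹ • ξ, Submodule.smul_mem _ _ (Submodule.mem_span_singleton_self ξ)⟩,
      hQC _ ?_⟩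
    have := hQsmul (ε / 2)⁻¹ (by positivity) _ h1
    rwa [smul_add, smul_smul, inv_mul_cancel₀ (by positivity), one_smul] at this
  obtain ⟨g, hg₀, hgC⟩ := riesz_extension (C.toPointedCone (hQC 0 h0Q)) f₀ nonneg dense
  have hgQ : ∀ q ∈ Q, 0 ≤ g q := fun q hq => hgC q (hQC q hq)
  have hgξ : g ξ = 1 := by
    have := hg₀ ⟨ξ, Submodule.mem_span_singleton_self ξ⟩
    rwa [LinearPMap.mkSpanSingleton_apply] at this
  have hgf : g f ≤ 0 := by
    have hmf : -f ∈ C := ⟨0, h0Q, 1, zero_le_one, by rw [one_smul, zero_add]⟩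
    have := hgC _ hmf
    rw [map_neg] at this
    linarith
  obtain ⟨μ, hμnull, hμrep⟩ := hmoment g hgQ
  have hae : ∀ᵐ x ∂μ, ∀ q ∈ Q, 0 ≤ (q : X → ℝ) x := ae_iff.mpr hμnull
  have hμne : μ ≠ 0 := by
    intro h
    have := hμrep ξ
    rw [h, integral_zero_measure, hgξ] at this
    norm_num at this
  -- `ξ` is integrable
  have hξint : Integrable (ξ : X → ℝ) μ := by
    by_contra h
    have := hμrep ξ
    rw [integral_undef h, hgξ] at this
    norm_num at this
  -- `q := ξ - t • f ∈ Q` for small `t`, and it is integrable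
  obtain ⟨ε, hε, ht⟩ := hξ (-f)
  set t : ℝ := ε / 2 with htdef
  have htpos : (0 : ℝ) < t := by positivity
  have hqQ : ξ + t • (-f) ∈ Q := ht t htpos.le (by rw [htdef]; linarith)
  have hgq : g (ξ + t • (-f)) = 1 - t * g f := by
    rw [map_add, LinearMap.map_smul, map_neg, hgξ, smul_eq_mul]
    ring
  have hgqpos : (0 : ℝ) < g (ξ + t • (-f)) := by
    rw [hgq]
    nlinarith
  have hqint : Integrable ((ξ + t • (-f) : A) : X → ℝ) μ := by
    by_contra h
    have := hμrep (ξ + t • (-f))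
    rw [integral_undef h] at this
    rw [this] at hgqpos
    norm_num at hgqpos
  -- hence `f` is integrable
  have hfcoe : (f : X → ℝ) = t⁻¹ • ((ξ : X → ℝ) - ((ξ + t • (-f) : A) : X → ℝ)) := by
    have : ((ξ + t • (-f) : A) : X → ℝ) = (ξ : X → ℝ) + t • (-(f : X → ℝ)) := by
      push_cast
      ring
    rw [this]
    funext x
    simp only [Pi.smul_apply, Pi.sub_apply, Pi.add_apply, Pi.neg_apply, smul_eq_mul]
    field_simp
    ring
  have hfint : Integrable (f : X → ℝ) μ := by
    rw [hfcoe]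
    exact (hξint.sub hqint).smul t⁻¹
  -- a.e. positivity of `f`
  have hfpos : ∀ᵐ x ∂μ, 0 < (f : X → ℝ) x := hae.mono fun x hx => hf x hx
  -- the integral of `f` is `g f ≤ 0` but also nonnegative
  have hint_f : ∫ x, (f : X → ℝ) x ∂μ = g f := (hμrep f).symm
  have hnonneg : 0 ≤ ∫ x, (f : X → ℝ) x ∂μ :=
    integral_nonneg_of_ae (hfpos.mono fun x hx => hx.le)
  have hzero : ∫ x, (f : X → ℝ) x ∂μ = 0 := le_antisymm (hint_f ▸ hgf) hnonneg
  have hfae0 : (f : X → ℝ) =ᵐ[μ] 0 :=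
    (integral_eq_zero_iff_of_nonneg_ae (hfpos.mono fun x hx => hx.le) hfint).1 hzero
  have : ∀ᵐ x ∂μ, False := by
    filter_upwards [hfae0, hfpos] with x h1 h2
    rw [Pi.zero_apply] at h1
    exact absurd h1 (ne_of_gt h2)
  have : μ Set.univ = 0 := by
    have := ae_iff.mp this
    simpa using this
  exact hμne (Measure.measure_univ_eq_zero.mp this)
end

section
/- Let A = ℝ[h₁,…,hₙ] be a finitely generated algebra of measurable functions and Q ⊆ A a quadratic module. If 1 − (h₁² + ⋯ + hₙ²) ∈ Q, then the constant function 1 lies in the algebraic interior of Q. -/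
/-- If `1 - (h₁² + ⋯ + hₙ²)` belongs to a quadratic module `Q` of the finitely
generated algebra `ℝ[h₁,…,hₙ]` of measurable functions, then the constant
function `1` lies in the algebraic interior of `Q`. -/
theorem one_mem_algebraic_interior
    {X : Type*} [MeasurableSpace X] {n : ℕ}
    (h : Fin n → (X → ℝ)) (hmeas : ∀ i, Measurable (h i))
    (Q : Set (X → ℝ))
    (hQA : Q ⊆ (Algebra.adjoin ℝ (Set.range h) : Subalgebra ℝ (X → ℝ)))
    (hQ1 : (1 : X → ℝ) ∈ Q)
    (hQadd : ∀ p ∈ Q, ∀ q ∈ Q, p + q ∈ Q)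
    (hQsmul : ∀ c : ℝ, 0 ≤ c → ∀ q ∈ Q, c • q ∈ Q)
    (hQsq : ∀ a ∈ (Algebra.adjoin ℝ (Set.range h) : Subalgebra ℝ (X → ℝ)),
      ∀ q ∈ Q, a ^ 2 * q ∈ Q)
    (hball : (1 - ∑ i : Fin n, (h i) ^ 2) ∈ Q) :
    ∀ g ∈ (Algebra.adjoin ℝ (Set.range h) : Subalgebra ℝ (X → ℝ)),
      ∃ ε > (0 : ℝ), ∀ t : ℝ, 0 ≤ t → t < ε → (1 : X → ℝ) + t • g ∈ Q := by
  intro g hg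
  set A := (Algebra.adjoin ℝ (Set.range h) : Subalgebra ℝ (X → ℝ)) with hA
  -- every element of A is "bounded": ∃ N > 0 with N•1 - g² ∈ Q
  have key : ∀ g, g ∈ A → ∃ N : ℝ, 0 < N ∧ (N • (1 : X → ℝ) - g ^ 2) ∈ Q := by
    intro g hg
    induction hg using Algebra.adjoin_induction with
    | mem x hx =>
      obtain ⟨i, rfl⟩ := hx
      refine ⟨1, one_pos, ?_⟩
      have hsum : (∑ j ∈ Finset.univ.erase i, (h j) ^ 2 * 1) ∈ Q := by
        refine Finset.sum_induction _ (· ∈ Q) (fun a b ha hb => hQadd a ha b hb) ?_ ?_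
        · simpa using hQsmul 0 le_rfl 1 hQ1
        · intro j _
          exact hQsq (h j) (Algebra.subset_adjoin ⟨j, rfl⟩) 1 hQ1
      have := hQadd _ hball _ hsum
      have heq : (1 - ∑ j : Fin n, (h j) ^ 2) + (∑ j ∈ Finset.univ.erase i, (h j) ^ 2 * 1)
          = (1 : ℝ) • (1 : X → ℝ) - (h i) ^ 2 := by
        have hsplit : (∑ j : Fin n, (h j) ^ 2)
            = (h i) ^ 2 + ∑ j ∈ Finset.univ.erase i, (h j) ^ 2 :=
          (Finset.add_sum_erase _ _ (Finset.mem_univ i)).symm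
        rw [hsplit]
        funext x
        simp only [Pi.add_apply, Pi.sub_apply, Pi.one_apply, Pi.smul_apply, smul_eq_mul,
          Pi.pow_apply, Pi.mul_apply, Finset.sum_apply]
        ring
      rwa [heq] at this
    | algebraMap r =>
      refine ⟨r ^ 2 + 1, by positivity, ?_⟩
      have heq : ((r ^ 2 + 1) • (1 : X → ℝ) - (algebraMap ℝ (X → ℝ) r) ^ 2) = 1 := by
        funext x
        simp only [Pi.sub_apply, Pi.smul_apply, Pi.one_apply, Pi.pow_apply, smul_eq_mul,
          Pi.algebraMap_apply, Algebra.algebraMap_self_apply]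
        ring
      rw [heq]; exact hQ1
    | add a b ha hb iha ihb =>
      obtain ⟨N, hN, hNQ⟩ := iha
      obtain ⟨M, hM, hMQ⟩ := ihb
      refine ⟨2 * (N + M), by positivity, ?_⟩
      have hsub : a - b ∈ A := sub_mem ha hb
      have h1 : (2:ℝ) • (N • (1 : X → ℝ) - a ^ 2) ∈ Q := hQsmul 2 (by norm_num) _ hNQ
      have h2 : (2:ℝ) • (M • (1 : X → ℝ) - b ^ 2) ∈ Q := hQsmul 2 (by norm_num) _ hMQ
      have h3 : (a - b) ^ 2 * 1 ∈ Q := hQsq _ hsub 1 hQ1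
      have := hQadd _ (hQadd _ h1 _ h2) _ h3
      have heq : (2:ℝ) • (N • (1 : X → ℝ) - a ^ 2) + (2:ℝ) • (M • (1 : X → ℝ) - b ^ 2)
          + (a - b) ^ 2 * 1 = (2 * (N + M)) • (1 : X → ℝ) - (a + b) ^ 2 := by
        funext x
        simp only [Pi.add_apply, Pi.sub_apply, Pi.one_apply, Pi.smul_apply, smul_eq_mul,
          Pi.pow_apply, Pi.mul_apply]
        ring
      rwa [heq] at this
    | mul a b ha hb iha ihb =>
      obtain ⟨N, hN, hNQ⟩ := iha
      obtain ⟨M, hM, hMQ⟩ := ihb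
      refine ⟨N * M, by positivity, ?_⟩
      have h1 : b ^ 2 * (N • (1 : X → ℝ) - a ^ 2) ∈ Q := hQsq b hb _ hNQ
      have h2 : N • (M • (1 : X → ℝ) - b ^ 2) ∈ Q := hQsmul N hN.le _ hMQ
      have := hQadd _ h1 _ h2
      have heq : b ^ 2 * (N • (1 : X → ℝ) - a ^ 2) + N • (M • (1 : X → ℝ) - b ^ 2)
          = (N * M) • (1 : X → ℝ) - (a * b) ^ 2 := by
        funext x
        simp only [Pi.add_apply, Pi.sub_apply, Pi.one_apply, Pi.smul_apply, smul_eq_mul,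
          Pi.pow_apply, Pi.mul_apply]
        ring
      rwa [heq] at this
  obtain ⟨N, hN, hNQ⟩ := key g hg
  -- (N+1)•1 + 2•g ∈ Q
  have hlin : ((N + 1) • (1 : X → ℝ) + (2 : ℝ) • g) ∈ Q := by
    have h1 : (1 + g) ^ 2 * 1 ∈ Q := hQsq _ (add_mem (one_mem A) hg) 1 hQ1
    have := hQadd _ h1 _ hNQ
    have heq : (1 + g) ^ 2 * 1 + (N • (1 : X → ℝ) - g ^ 2)
        = (N + 1) • (1 : X → ℝ) + (2 : ℝ) • g := by
      funext x
      simp only [Pi.add_apply, Pi.sub_apply, Pi.one_apply, Pi.smul_apply, smul_eq_mul,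
        Pi.pow_apply, Pi.mul_apply]
      ring
    rwa [heq] at this
  refine ⟨2 / (N + 1), by positivity, ?_⟩
  intro t ht htε
  have htN : t * (N + 1) < 2 := (lt_div_iff₀ (by positivity)).mp htε
  have hc : 0 ≤ 1 - t * (N + 1) / 2 := by linarith
  have h1 : (t / 2) • ((N + 1) • (1 : X → ℝ) + (2 : ℝ) • g) ∈ Q :=
    hQsmul _ (by positivity) _ hlin
  have h2 : (1 - t * (N + 1) / 2) • (1 : X → ℝ) ∈ Q := hQsmul _ hc _ hQ1
  have := hQadd _ h1 _ h2
  have heq : (t / 2) • ((N + 1) • (1 : X → ℝ) + (2 : ℝ) • g)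
      + (1 - t * (N + 1) / 2) • (1 : X → ℝ) = (1 : X → ℝ) + t • g := by
    funext x
    simp only [Pi.add_apply, Pi.one_apply, Pi.smul_apply, smul_eq_mul]
    ring
  rwa [heq] at this
end
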